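/- Let H be a complex inner product space of finite dimension n ≥ 1, let ε ∈ {−1, 1}, and let C : H → H be an antilinear conjugation, i.e. C is additive, C(αx) = conj(α)·C(x), ⟨Cx, Cy⟩ = ⟨y, x⟩ for all x, y ∈ H and α ∈ ℂ, and C² = ε·id. Let T : H → H be an invertible linear map whose adjoint satisfies T* = C∘T∘C. Then there exist an orthonormal basis f₁, …, fₙ of H and nonnegative real numbers λ₁, …, λₙ such that T(fₖ) = λₖ · C(fₖ) for k = 1, …, n. -/

import Mathlib

open scoped InnerProductSpace ComplexConjugate

universe u

lemma stmt16_core (n : ℕ) :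
    ∀ {H : Type u} [NormedAddCommGroup H] [InnerProductSpace ℂ H]
      [FiniteDimensional ℂ H], Module.finrank ℂ H = n →
    ∀ (A : H → H),
      (∀ x y, A (x + y) = A x + A y) →
      (∀ (a : ℂ) (x : H), A (a • x) = (conj a) • A x) →
      (∀ x y, ⟪A x, y⟫_ℂ = ⟪A y, x⟫_ℂ) →
      Function.Injective A →
      ∃ (b : OrthonormalBasis (Fin n) ℂ H) (lam : Fin n → ℝ),
        (∀ k, 0 ≤ lam k) ∧ ∀ k, A (b k) = (lam k : ℂ) • b k := by
  induction n with
  | zero =>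
      intro H _ _ _ hdim A _ _ _ _
      haveI : Subsingleton H := Module.finrank_zero_iff.mp hdim
      have hsp : (⊤ : Submodule ℂ H) ≤ Submodule.span ℂ (Set.range (fun i : Fin 0 => i.elim0)) := by
        intro x _
        have : x = 0 := Subsingleton.elim _ _
        simp [this]
      exact ⟨OrthonormalBasis.mk ⟨fun i => i.elim0, fun i => i.elim0⟩ hsp,
        fun k => 0, fun k => k.elim0, fun k => k.elim0⟩
  | succ n ih =>
      intro H _ _ _ hdim A hadd hsmul hsym hinj
      -- the square of A as a linear map
      set S : H →ₗ[ℂ] H :=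
        { toFun := fun x => A (A x)
          map_add' := by intro x y; simp [hadd]
          map_smul' := by intro a x; simp [hsmul] } with hSdef
      have hS : S.IsSymmetric := by
        intro x y
        have h1 : ⟪A (A x), y⟫_ℂ = ⟪A y, A x⟫_ℂ := hsym (A x) y
        have h2 : ⟪x, A (A y)⟫_ℂ = ⟪A y, A x⟫_ℂ := by
          rw [← inner_conj_symm, hsym (A y) x, inner_conj_symm]
        exact h1.trans h2.symm
      set v : H := hS.eigenvectorBasis hdim 0 with hv
      set μ : ℝ := hS.eigenvalues hdim 0 with hμ
      have hSv : A (A v) = (μ : ℂ) • v := hS.apply_eigenvectorBasis hdim 0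
      have hv1 : ‖v‖ = 1 := (hS.eigenvectorBasis hdim).orthonormal.1 0
      have hv0 : v ≠ 0 := by intro h; rw [h, norm_zero] at hv1; norm_num at hv1
      have hA0 : A 0 = 0 := by
        have h := hadd 0 0
        rw [add_zero] at h
        exact (left_eq_add.mp h)
      have hAv0 : A v ≠ 0 := by
        intro h
        exact hv0 (hinj (h.trans hA0.symm))
      have hinner : ⟪A v, A v⟫_ℂ = (μ : ℂ) := by
        rw [← hsym (A v) v, hSv, inner_smul_left, inner_self_eq_norm_sq_to_K, hv1]
        simp
      have hμval : ((‖A v‖ ^ 2 : ℝ) : ℂ) = (μ : ℂ) := by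
        rw [← hinner, inner_self_eq_norm_sq_to_K]; norm_num
      have hμpos : 0 < μ := by
        have h := Complex.ofReal_inj.mp hμval
        rw [← h]
        exact pow_pos (norm_pos_iff.mpr hAv0) 2
      set l : ℝ := Real.sqrt μ with hldef
      have hlpos : 0 < l := Real.sqrt_pos.mpr hμpos
      have hl2 : (l : ℂ) * (l : ℂ) = (μ : ℂ) := by
        norm_cast
        exact Real.mul_self_sqrt hμpos.le
      -- find a unit eigenvector f with A f = l • f
      obtain ⟨f, hf1, hfe⟩ : ∃ f : H, ‖f‖ = 1 ∧ A f = (l : ℂ) • f := by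
        by_cases hw : A v + (l : ℂ) • v = 0
        · -- A v = -l • v ; take f = I • v
          have hAv : A v = -((l : ℂ) • v) := by linear_combination (norm := module) hw
          refine ⟨Complex.I • v, ?_, ?_⟩
          · rw [norm_smul, Complex.norm_I, one_mul, hv1]
          · rw [hsmul, Complex.conj_I, hAv, smul_comm]
            simp [smul_smul]
        · set w : H := A v + (l : ℂ) • v with hwdef
          have hAw : A w = (l : ℂ) • w := by
            rw [hwdef, hadd, hsmul, Complex.conj_ofReal, hSv, smul_add, smul_smul, hl2]
            module
          refine ⟨((‖w‖⁻¹ : ℝ) : ℂ) • w, ?_, ?_⟩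
          · have hwn : ‖w‖ ≠ 0 := norm_ne_zero_iff.mpr hw
            rw [norm_smul, Complex.norm_real, Real.norm_eq_abs,
              abs_of_nonneg (inv_nonneg.mpr (norm_nonneg w)), inv_mul_cancel₀ hwn]
          · rw [hsmul, Complex.conj_ofReal, hAw, smul_comm]
      have hf0 : f ≠ 0 := by intro h; rw [h, norm_zero] at hf1; norm_num at hf1
      have hKmem : ∀ x ∈ (ℂ ∙ f)ᗮ, A x ∈ (ℂ ∙ f)ᗮ := by
        intro x hx
        rw [Submodule.mem_orthogonal_singleton_iff_inner_right] at hx ⊢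
        have h1 : ⟪A x, f⟫_ℂ = 0 := by
          rw [hsym x f, hfe, inner_smul_left, hx, mul_zero]
        rw [← inner_conj_symm, h1, map_zero]
      haveI : Fact (Module.finrank ℂ H = n + 1) := ⟨hdim⟩
      have hK : Module.finrank ℂ (ℂ ∙ f)ᗮ = n := Submodule.finrank_orthogonal_span_singleton hf0
      obtain ⟨b', lam', hlam', heig'⟩ :=
        ih hK (fun x => ⟨A x, hKmem x x.2⟩)
          (fun x y => Subtype.ext (by simp [hadd]))
          (fun a x => Subtype.ext (by simp [hsmul]))
          (fun x y => by simpa [Submodule.coe_inner] using hsym (x : H) (y : H))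
          (fun x y h => Subtype.ext (hinj (congrArg Subtype.val h)))
      set g : Fin (n + 1) → H := Fin.cons f (fun k => (b' k : H)) with hgdef
      have h_on : Orthonormal ℂ g := by
        rw [orthonormal_iff_ite]
        intro i j
        refine Fin.cases ?_ ?_ i
        · refine Fin.cases ?_ ?_ j
          · simp [hgdef, inner_self_eq_norm_sq_to_K, hf1]
          · intro j'
            have : ⟪f, ((b' j' : H))⟫_ℂ = 0 :=
              Submodule.mem_orthogonal_singleton_iff_inner_right.mp (b' j').2
            simp [hgdef, this]
            exact (Ne.symm (Fin.succ_ne_zero j'))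
        · intro i'
          refine Fin.cases ?_ ?_ j
          · have hmem : ⟪f, ((b' i' : H))⟫_ℂ = 0 :=
              Submodule.mem_orthogonal_singleton_iff_inner_right.mp (b' i').2
            have : ⟪(b' i' : H), f⟫_ℂ = 0 := by
              rw [← inner_conj_symm, hmem, map_zero]
            simp [hgdef, this, (Fin.succ_ne_zero i')]
          · intro j'
            have hbon := orthonormal_iff_ite.mp b'.orthonormal i' j'
            rw [Submodule.coe_inner] at hbon
            simp [hgdef, hbon, Fin.succ_inj]
      have hsp : ⊤ ≤ Submodule.span ℂ (Set.range g) := by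
        rw [h_on.linearIndependent.span_eq_top_of_card_eq_finrank (by simp [hdim])]
      refine ⟨OrthonormalBasis.mk h_on hsp, Fin.cons l lam', ?_, ?_⟩
      · intro k
        refine Fin.cases ?_ ?_ k
        · exact hlpos.le
        · intro k'; exact hlam' k'
      · intro k
        rw [OrthonormalBasis.coe_mk]
        refine Fin.cases ?_ ?_ k
        · simpa [hgdef] using hfe
        · intro k'
          have := congrArg Subtype.val (heig' k')
          simpa [hgdef] using this

/-- skew eigenfunctions: an orthonormal basis with
T fₖ = λₖ · C fₖ, λₖ ≥ 0 (Thm. on skew eigenfunctions, part 2). -/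
theorem stmt_16 {H : Type*} [NormedAddCommGroup H] [InnerProductSpace ℂ H]
    [FiniteDimensional ℂ H] (n : ℕ) (hn : 1 ≤ n) (hdim : Module.finrank ℂ H = n)
    (ε : ℂ) (hε : ε = 1 ∨ ε = -1)
    (C : H → H)
    (hCadd : ∀ x y : H, C (x + y) = C x + C y)
    (hCsmul : ∀ (a : ℂ) (x : H), C (a • x) = (conj a) • C x)
    (hCiso : ∀ x y : H, ⟪C x, C y⟫_ℂ = ⟪y, x⟫_ℂ)
    (hCsq : ∀ x : H, C (C x) = ε • x)
    (T : H →ₗ[ℂ] H) (hTinv : Function.Bijective T)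
    (hTadj : ∀ x : H, LinearMap.adjoint T x = C (T (C x))) :
    ∃ (b : OrthonormalBasis (Fin n) ℂ H) (lam : Fin n → ℝ),
      (∀ k, 0 ≤ lam k) ∧ ∀ k, T (b k) = (lam k : ℂ) • C (b k) := by
  have hε1 : ε * ε = 1 := by rcases hε with h | h <;> rw [h] <;> ring
  have hεconj : conj ε = ε := by rcases hε with h | h <;> rw [h] <;> simp
  have hε0 : ε ≠ 0 := by rcases hε with h | h <;> rw [h] <;> norm_num
  set A : H → H := fun x => ε • C (T x) with hAdef
  have hadd : ∀ x y : H, A (x + y) = A x + A y := by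
    intro x y
    rw [hAdef]
    simp only [map_add, hCadd, smul_add]
  have hsmul : ∀ (a : ℂ) (x : H), A (a • x) = (conj a) • A x := by
    intro a x
    rw [hAdef]
    simp only [map_smul, hCsmul, smul_comm ε (conj a)]
  have hkey : ∀ x y : H, ⟪C (T x), y⟫_ℂ = ⟪C (T y), x⟫_ℂ := by
    intro x y
    have hy : ε • C (C y) = y := by rw [hCsq, smul_smul, hε1, one_smul]
    calc ⟪C (T x), y⟫_ℂ = ⟪C (T x), ε • C (C y)⟫_ℂ := by rw [hy]
      _ = ε * ⟪C (T x), C (C y)⟫_ℂ := inner_smul_right _ _ _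
      _ = ε * ⟪C y, T x⟫_ℂ := by rw [hCiso]
      _ = ε * ⟪LinearMap.adjoint T (C y), x⟫_ℂ := by rw [LinearMap.adjoint_inner_left]
      _ = ε * ⟪C (T (C (C y))), x⟫_ℂ := by rw [hTadj]
      _ = ε * ⟪C (T (ε • y)), x⟫_ℂ := by rw [hCsq]
      _ = ε * ⟪conj ε • C (T y), x⟫_ℂ := by rw [map_smul, hCsmul]
      _ = ε * (conj (conj ε) * ⟪C (T y), x⟫_ℂ) := by rw [inner_smul_left]
      _ = ⟪C (T y), x⟫_ℂ := by rw [hεconj, hεconj, ← mul_assoc, hε1, one_mul]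
  have hsym : ∀ x y : H, ⟪A x, y⟫_ℂ = ⟪A y, x⟫_ℂ := by
    intro x y
    rw [hAdef]
    simp only [inner_smul_left]
    rw [hkey]
  have hCinj : Function.Injective C := by
    intro a b h
    have h2 := congrArg C h
    rw [hCsq, hCsq] at h2
    exact smul_right_injective H hε0 h2
  have hinj : Function.Injective A := by
    intro x y h
    rw [hAdef] at h
    exact hTinv.injective (hCinj (smul_right_injective H hε0 h))
  obtain ⟨b, lam, h0, he⟩ := stmt16_core n hdim A hadd hsmul hsym hinj
  refine ⟨b, lam, h0, ?_⟩
  intro k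
  have h1 : C (T (b k)) = (ε * (lam k : ℂ)) • b k := by
    have h := congrArg (fun z => ε • z) (he k)
    simp only [hAdef, smul_smul, hε1, one_smul] at h
    exact h
  have h2 : ε • T (b k) = (ε * (lam k : ℂ)) • C (b k) := by
    have h := congrArg C h1
    rw [hCsq, hCsmul, map_mul, hεconj, Complex.conj_ofReal] at h
    exact h
  have h3 := congrArg (fun z => ε • z) h2
  simp only [smul_smul, ← mul_assoc, hε1, one_mul, one_smul] at h3
  exact h3
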